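/- Let b = √(3/2) and consider the 3×3 complex matrices A₁ and A₂ defined so that A₁ᴴ is the real matrix with rows (-2, b, 0), (-b, 0, b), (0, -b, 2), and A₂ᴴ is the complex symmetric matrix with rows (-i, √2, 0), (√2, 0, √2), (0, √2, i), where ᴴ denotes conjugate transpose and i is the imaginary unit. Then there exists no positive-definite Hermitian 3×3 complex matrix Θ satisfying both A₁ᴴ Θ = Θ A₁ and A₂ᴴ Θ = Θ A₂. -/

import Mathlib

open scoped ComplexOrder
open Matrix Complex

/-- The paper's example at `s = 1/2`, `a = 1/2`: the two candidates `A₁`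
(with `A₁ᴴ` real asymmetric) and `A₂` (with `A₂ᴴ` complex symmetric) admit no
shared positive-definite Hermitian metric, i.e. they are incompatible. -/
theorem example_incompatible :
    ¬ ∃ Θ : Matrix (Fin 3) (Fin 3) ℂ, Θ.IsHermitian ∧ Θ.PosDef ∧
      ((!![(-2 : ℂ), (Real.sqrt (3/2) : ℂ), 0;
           -(Real.sqrt (3/2) : ℂ), 0, (Real.sqrt (3/2) : ℂ);
           0, -(Real.sqrt (3/2) : ℂ), 2])ᴴ)ᴴ * Θ =
        Θ * (!![(-2 : ℂ), (Real.sqrt (3/2) : ℂ), 0;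
                -(Real.sqrt (3/2) : ℂ), 0, (Real.sqrt (3/2) : ℂ);
                0, -(Real.sqrt (3/2) : ℂ), 2])ᴴ ∧
      ((!![-Complex.I, (Real.sqrt 2 : ℂ), 0;
           (Real.sqrt 2 : ℂ), 0, (Real.sqrt 2 : ℂ);
           0, (Real.sqrt 2 : ℂ), Complex.I])ᴴ)ᴴ * Θ =
        Θ * (!![-Complex.I, (Real.sqrt 2 : ℂ), 0;
                (Real.sqrt 2 : ℂ), 0, (Real.sqrt 2 : ℂ);
                0, (Real.sqrt 2 : ℂ), Complex.I])ᴴ := by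
  rintro ⟨Θ, hH, hP, h1, h2⟩
  rw [conjTranspose_conjTranspose] at h1 h2
  set b : ℝ := Real.sqrt (3/2) with hbdef
  set c : ℝ := Real.sqrt 2 with hcdef
  have hb : ((b : ℝ) : ℂ) ^ 2 = 3/2 := by
    rw [hbdef, ← Complex.ofReal_pow, Real.sq_sqrt (by norm_num : (0:ℝ) ≤ 3/2)]
    norm_num
  have hc : ((c : ℝ) : ℂ) ^ 2 = 2 := by
    rw [hcdef, ← Complex.ofReal_pow, Real.sq_sqrt (by norm_num : (0:ℝ) ≤ 2)]
    norm_num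
  have e1 := congrFun (congrFun h1 0) 0
  have e2 := congrFun (congrFun h2 0) 0
  simp [Matrix.mul_apply, Fin.sum_univ_three, Matrix.conjTranspose_apply, map_ofNat] at e1 e2
  have h00 : Θ 0 0 = 0 := by
    linear_combination (-Complex.I * (b : ℂ) * (c : ℂ) / 3) * e1
      + (Complex.I / 2) * e2 + Θ 0 0 * Complex.I_sq
      + (Complex.I * (c : ℂ) / 3) * (Θ 1 0 - Θ 0 1) * hb
  have hx : (![1, 0, 0] : Fin 3 → ℂ) ≠ 0 := by
    intro h
    have := congrFun h 0
    simp at this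
  have hpos := hP.dotProduct_mulVec_pos hx
  simp [dotProduct, Matrix.mulVec, Fin.sum_univ_three, h00] at hpos
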